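/- Let A, B, C, D ∈ ℝ² with no three collinear. Then there exists a nonzero polynomial g(x, y) of degree at most 2 such that: (i) g(O) = 0 for every point O ∈ ℝ² that is a center of some conic through A, B, C, D; (ii) g vanishes at the six midpoints (A+B)/2, (A+C)/2, (A+D)/2, (B+C)/2, (B+D)/2, (C+D)/2; and (iii) g(E) = 0 for every point E lying on two opposite sides of the quadrangle, that is, every E lying both on the line through A, B and on the line through C, D, or both on the line through A, C and on the line through B, D, or both on the line through A, D and on the line through B, C. -/

import Mathlib

/-- A conic (possibly degenerate) in the affine plane `ℝ × ℝ`, given by the six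
coefficients of a polynomial `a·x² + b·x·y + c·y² + d·x + e·y + g`. -/
structure Conic where
  a : ℝ
  b : ℝ
  c : ℝ
  d : ℝ
  e : ℝ
  g : ℝ

/-- Evaluation of the defining polynomial of a conic at a point of `ℝ × ℝ`. -/
def Conic.eval (f : Conic) (p : ℝ × ℝ) : ℝ :=
  f.a * p.1 ^ 2 + f.b * p.1 * p.2 + f.c * p.2 ^ 2 + f.d * p.1 + f.e * p.2 + f.g

/-- The defining polynomial is nonzero. -/
def Conic.Nonzero (f : Conic) : Prop :=
  ¬ (f.a = 0 ∧ f.b = 0 ∧ f.c = 0 ∧ f.d = 0 ∧ f.e = 0 ∧ f.g = 0)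

/-- The conic passes through the four points `A`, `B`, `C`, `D`. -/
def Conic.Through (f : Conic) (A B C D : ℝ × ℝ) : Prop :=
  f.eval A = 0 ∧ f.eval B = 0 ∧ f.eval C = 0 ∧ f.eval D = 0

/-- No three of the four points `A`, `B`, `C`, `D` are collinear. -/
def NoThreeCollinear (A B C D : ℝ × ℝ) : Prop :=
  ¬ Collinear ℝ ({A, B, C} : Set (ℝ × ℝ)) ∧ ¬ Collinear ℝ ({A, B, D} : Set (ℝ × ℝ)) ∧
  ¬ Collinear ℝ ({A, C, D} : Set (ℝ × ℝ)) ∧ ¬ Collinear ℝ ({B, C, D} : Set (ℝ × ℝ))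

/-- The line through `M` with direction `u`. -/
def parmLine (M u : ℝ × ℝ) : Set (ℝ × ℝ) :=
  {p | ∃ t : ℝ, p = M + t • u}

/-- `O` is a center of the conic `f`. -/
def Conic.IsCenter (f : Conic) (O : ℝ × ℝ) : Prop :=
  ∀ w : ℝ × ℝ, f.eval (O + w) = f.eval (O - w)


section ElevenPointAux

/-- Coefficients `(u, v, w)` of the linear form `u·x + v·y + w` vanishing on the
line through `P` and `Q`. -/
def lineCf (P Q : ℝ × ℝ) : ℝ × ℝ × ℝ := (Q.2 - P.2, P.1 - Q.1, Q.1 * P.2 - P.1 * Q.2)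

/-- The degenerate conic given by the product of two linear forms. -/
def prodConic (l m : ℝ × ℝ × ℝ) : Conic :=
  ⟨l.1 * m.1, l.1 * m.2.1 + l.2.1 * m.1, l.2.1 * m.2.1, l.1 * m.2.2 + l.2.2 * m.1,
   l.2.1 * m.2.2 + l.2.2 * m.2.1, l.2.2 * m.2.2⟩

/-- Jacobian conic `det(∇p, ∇q)` of two conics. -/
def jacConic (p q : Conic) : Conic :=
  ⟨2 * (p.a * q.b - q.a * p.b), 4 * (p.a * q.c - q.a * p.c), 2 * (p.b * q.c - q.b * p.c),
   2 * p.a * q.e + p.d * q.b - 2 * q.a * p.e - q.d * p.b,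
   p.b * q.e + 2 * p.d * q.c - q.b * p.e - 2 * q.d * p.c,
   p.d * q.e - q.d * p.e⟩

/-- The eleven-point conic of the quadrangle `A B C D`. -/
def elevenC (A B C D : ℝ × ℝ) : Conic :=
  jacConic (prodConic (lineCf A B) (lineCf C D)) (prodConic (lineCf A C) (lineCf B D))

lemma collinear_of_cross (P Q R : ℝ × ℝ)
    (h : (Q.1 - P.1) * (R.2 - P.2) - (Q.2 - P.2) * (R.1 - P.1) = 0) :
    Collinear ℝ ({P, Q, R} : Set (ℝ × ℝ)) := by
  by_cases hQP : Q = P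
  · rw [hQP]
    have : ({P, P, R} : Set (ℝ × ℝ)) = {P, R} := by simp [Set.insert_comm]
    rw [this]
    exact collinear_pair ℝ P R
  · apply (collinear_iff_of_mem (Set.mem_insert P {Q, R})).mpr
    refine ⟨Q - P, fun p hp => ?_⟩
    simp only [Set.mem_insert_iff, Set.mem_singleton_iff] at hp
    rcases hp with rfl | rfl | rfl
    · exact ⟨0, by simp⟩
    · refine ⟨1, ?_⟩
      have : (1:ℝ) • (p - P) +ᵥ P = p := by simp
      rw [this]
    · by_cases h1 : Q.1 - P.1 = 0
      · have h2 : Q.2 - P.2 ≠ 0 := by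
          intro h2
          apply hQP
          have e1 : Q.1 = P.1 := by linarith
          have e2 : Q.2 = P.2 := by linarith
          exact Prod.ext e1 e2
        refine ⟨(p.2 - P.2)/(Q.2 - P.2), ?_⟩
        have hx : p.1 - P.1 = 0 := by
          have hh := h
          rw [h1] at hh
          simp at hh
          rcases hh with h' | h'
          · exact absurd h' h2
          · exact h'
        apply Prod.ext
        · simp [h1]
          linarith
        · simp
          field_simp
          ring
      · refine ⟨(p.1 - P.1)/(Q.1 - P.1), ?_⟩
        apply Prod.ext
        · simp
          field_simp
          ring
        · simp
          field_simp
          linear_combination h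

lemma cross_eq_zero_of_mem (P Q : ℝ × ℝ) {E : ℝ × ℝ}
    (h : E ∈ affineSpan ℝ ({P, Q} : Set (ℝ × ℝ))) :
    (Q.1 - P.1) * (E.2 - P.2) - (Q.2 - P.2) * (E.1 - P.1) = 0 := by
  obtain ⟨r, hr⟩ := vadd_left_mem_affineSpan_pair.mp
    (show (E - P) +ᵥ P ∈ line[ℝ, P, Q] by simpa)
  have h1 := congrArg Prod.fst hr
  have h2 := congrArg Prod.snd hr
  simp at h1 h2
  linear_combination (Q.2 - P.2) * h1 - (Q.1 - P.1) * h2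

lemma midpoint_coords (P Q : ℝ × ℝ) :
    midpoint ℝ P Q = ((P.1 + Q.1)/2, (P.2 + Q.2)/2) := by
  rw [midpoint_eq_smul_add]; ext <;> simp <;> ring

end ElevenPointAux

set_option maxHeartbeats 3000000 in
/-- **The eleven-point conic.** For four base points with no three collinear there
is a (possibly degenerate) conic `g` passing through every center of a conic of
the family through the four base points, through the six midpoints of the sides
of the quadrangle, and through the three diagonal points of the quadrangle. -/
theorem eleven_point_conic
    (A B C D : ℝ × ℝ) (hgen : NoThreeCollinear A B C D) :
    ∃ g : Conic, g.Nonzero ∧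
      (∀ O : ℝ × ℝ,
        (∃ f : Conic, f.Nonzero ∧ f.Through A B C D ∧ f.IsCenter O) → g.eval O = 0) ∧
      (g.eval (midpoint ℝ A B) = 0 ∧ g.eval (midpoint ℝ A C) = 0 ∧
       g.eval (midpoint ℝ A D) = 0 ∧ g.eval (midpoint ℝ B C) = 0 ∧
       g.eval (midpoint ℝ B D) = 0 ∧ g.eval (midpoint ℝ C D) = 0) ∧
      (∀ E : ℝ × ℝ,
        ((E ∈ affineSpan ℝ ({A, B} : Set (ℝ × ℝ)) ∧
          E ∈ affineSpan ℝ ({C, D} : Set (ℝ × ℝ))) ∨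
         (E ∈ affineSpan ℝ ({A, C} : Set (ℝ × ℝ)) ∧
          E ∈ affineSpan ℝ ({B, D} : Set (ℝ × ℝ))) ∨
         (E ∈ affineSpan ℝ ({A, D} : Set (ℝ × ℝ)) ∧
          E ∈ affineSpan ℝ ({B, C} : Set (ℝ × ℝ)))) → g.eval E = 0) := by
  obtain ⟨hABC, hABD, hACD, hBCD⟩ := hgen
  have kABC : (B.1-A.1)*(C.2-A.2) - (B.2-A.2)*(C.1-A.1) ≠ 0 :=
    fun h => hABC (collinear_of_cross A B C h)
  have kABD : (B.1-A.1)*(D.2-A.2) - (B.2-A.2)*(D.1-A.1) ≠ 0 :=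
    fun h => hABD (collinear_of_cross A B D h)
  have kACD : (C.1-A.1)*(D.2-A.2) - (C.2-A.2)*(D.1-A.1) ≠ 0 :=
    fun h => hACD (collinear_of_cross A C D h)
  refine ⟨elevenC A B C D, ?_, ?_, ?_, ?_⟩
  · -- Nonzero
    rintro ⟨h1, h2, h3, h4, h5, h6⟩
    have hA0 : (elevenC A B C D).eval A = 0 := by
      simp [Conic.eval, h1, h2, h3, h4, h5, h6]
    have hAfac : (elevenC A B C D).eval A =
        ((C.1-A.1)*(D.2-A.2)-(C.2-A.2)*(D.1-A.1)) *
        ((B.1-A.1)*(D.2-A.2)-(B.2-A.2)*(D.1-A.1)) *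
        ((B.1-A.1)*(C.2-A.2)-(B.2-A.2)*(C.1-A.1)) := by
      simp only [elevenC, jacConic, prodConic, lineCf, Conic.eval]
      ring
    rw [hAfac] at hA0
    exact (mul_ne_zero (mul_ne_zero kACD kABD) kABC) hA0
  · -- centers
    rintro O ⟨f, hfnz, ⟨hfA, hfB, hfC, hfD⟩, hcen⟩
    have hA' : f.a * A.1 ^ 2 + f.b * A.1 * A.2 + f.c * A.2 ^ 2 + f.d * A.1 + f.e * A.2 + f.g = 0 := hfA
    have hB' : f.a * B.1 ^ 2 + f.b * B.1 * B.2 + f.c * B.2 ^ 2 + f.d * B.1 + f.e * B.2 + f.g = 0 := hfB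
    have hC' : f.a * C.1 ^ 2 + f.b * C.1 * C.2 + f.c * C.2 ^ 2 + f.d * C.1 + f.e * C.2 + f.g = 0 := hfC
    have hD' : f.a * D.1 ^ 2 + f.b * D.1 * D.2 + f.c * D.2 ^ 2 + f.d * D.1 + f.e * D.2 + f.g = 0 := hfD
    have e4 : 2*f.a*O.1 + f.b*O.2 + f.d = 0 := by
      have h := hcen (1, 0)
      simp only [Conic.eval, Prod.fst_add, Prod.snd_add, Prod.fst_sub, Prod.snd_sub] at h
      norm_num at h
      linear_combination h / 2
    have e5 : f.b*O.1 + 2*f.c*O.2 + f.e = 0 := by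
      have h := hcen (0, 1)
      simp only [Conic.eval, Prod.fst_add, Prod.snd_add, Prod.fst_sub, Prod.snd_sub] at h
      norm_num at h
      linear_combination h / 2
    have hv5 : ¬(f.a = 0 ∧ f.b = 0 ∧ f.c = 0 ∧ f.d = 0 ∧ f.e = 0) := by
      rintro ⟨h1, h2, h3, h4, h5⟩
      exact hfnz ⟨h1, h2, h3, h4, h5, by
        have := hA'
        rw [h1, h2, h3, h4, h5] at this
        linarith⟩
    have key_a : (elevenC A B C D).eval O * f.a = 0 := by
      simp only [elevenC, jacConic, prodConic, lineCf, Conic.eval]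
      linear_combination (-C.2*D.2^2*O.1 - 2*C.2*D.1*O.2^2 + 2*C.2*D.1*D.2*O.2 + C.2^2*D.2*O.1 + C.2^2*D.1*O.2 - C.2^2*D.1*D.2 + 2*C.1*D.2*O.2^2 - C.1*D.2^2*O.2 - 2*C.1*C.2*D.2*O.2 + C.1*C.2*D.2^2 + A.2*D.2^2*O.1 + 2*A.2*D.1*O.2^2 - 2*A.2*D.1*D.2*O.2 - A.2*C.2^2*O.1 - 2*A.2*C.1*O.2^2 + 2*A.2*C.1*C.2*O.2 - A.2^2*D.2*O.1 - A.2^2*D.1*O.2 + A.2^2*D.1*D.2 + A.2^2*C.2*O.1 + A.2^2*C.1*O.2 - A.2^2*C.1*C.2 - 2*A.1*D.2*O.2^2 + A.1*D.2^2*O.2 + 2*A.1*C.2*O.2^2 - A.1*C.2^2*O.2 + 2*A.1*A.2*D.2*O.2 - A.1*A.2*D.2^2 - 2*A.1*A.2*C.2*O.2 + A.1*A.2*C.2^2) * hB' - (-C.2*D.2^2*O.1 - 2*C.2*D.1*O.2^2 + 2*C.2*D.1*D.2*O.2 + C.2^2*D.2*O.1 + C.2^2*D.1*O.2 - C.2^2*D.1*D.2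 + 2*C.1*D.2*O.2^2 - C.1*D.2^2*O.2 - 2*C.1*C.2*D.2*O.2 + C.1*C.2*D.2^2 + A.2*D.2^2*O.1 + 2*A.2*D.1*O.2^2 - 2*A.2*D.1*D.2*O.2 - A.2*C.2^2*O.1 - 2*A.2*C.1*O.2^2 + 2*A.2*C.1*C.2*O.2 - A.2^2*D.2*O.1 - A.2^2*D.1*O.2 + A.2^2*D.1*D.2 + A.2^2*C.2*O.1 + A.2^2*C.1*O.2 - A.2^2*C.1*C.2 - 2*A.1*D.2*O.2^2 + A.1*D.2^2*O.2 + 2*A.1*C.2*O.2^2 - A.1*C.2^2*O.2 + 2*A.1*A.2*D.2*O.2 - A.1*A.2*D.2^2 - 2*A.1*A.2*C.2*O.2 + A.1*A.2*C.2^2) * hA' + (B.2*D.2^2*O.1 + 2*B.2*D.1*O.2^2 - 2*B.2*D.1*D.2*O.2 - B.2^2*D.2*O.1 - B.2^2*D.1*O.2 + B.2^2*D.1*D.2 - 2*B.1*D.2*O.2^2 + B.1*D.2^2*O.2 + 2*B.1*B.2*D.2*O.2 - B.1*B.2*D.2^2 - A.2*D.2^2*O.1 - 2*A.2*D.1*O.2^2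 + 2*A.2*D.1*D.2*O.2 + A.2*B.2^2*O.1 + 2*A.2*B.1*O.2^2 - 2*A.2*B.1*B.2*O.2 + A.2^2*D.2*O.1 + A.2^2*D.1*O.2 - A.2^2*D.1*D.2 - A.2^2*B.2*O.1 - A.2^2*B.1*O.2 + A.2^2*B.1*B.2 + 2*A.1*D.2*O.2^2 - A.1*D.2^2*O.2 - 2*A.1*B.2*O.2^2 + A.1*B.2^2*O.2 - 2*A.1*A.2*D.2*O.2 + A.1*A.2*D.2^2 + 2*A.1*A.2*B.2*O.2 - A.1*A.2*B.2^2) * hC' - (B.2*D.2^2*O.1 + 2*B.2*D.1*O.2^2 - 2*B.2*D.1*D.2*O.2 - B.2^2*D.2*O.1 - B.2^2*D.1*O.2 + B.2^2*D.1*D.2 - 2*B.1*D.2*O.2^2 + B.1*D.2^2*O.2 + 2*B.1*B.2*D.2*O.2 - B.1*B.2*D.2^2 - A.2*D.2^2*O.1 - 2*A.2*D.1*O.2^2 + 2*A.2*D.1*D.2*O.2 + A.2*B.2^2*O.1 + 2*A.2*B.1*O.2^2 - 2*A.2*B.1*B.2*O.2 + A.2^2*D.2*O.1 + A.2^2*D.1*O.2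 - A.2^2*D.1*D.2 - A.2^2*B.2*O.1 - A.2^2*B.1*O.2 + A.2^2*B.1*B.2 + 2*A.1*D.2*O.2^2 - A.1*D.2^2*O.2 - 2*A.1*B.2*O.2^2 + A.1*B.2^2*O.2 - 2*A.1*A.2*D.2*O.2 + A.1*A.2*D.2^2 + 2*A.1*A.2*B.2*O.2 - A.1*A.2*B.2^2) * hA' + (-B.2*C.2^2*O.1 - 2*B.2*C.1*O.2^2 + 2*B.2*C.1*C.2*O.2 + B.2^2*C.2*O.1 + B.2^2*C.1*O.2 - B.2^2*C.1*C.2 + 2*B.1*C.2*O.2^2 - B.1*C.2^2*O.2 - 2*B.1*B.2*C.2*O.2 + B.1*B.2*C.2^2 + A.2*C.2^2*O.1 + 2*A.2*C.1*O.2^2 - 2*A.2*C.1*C.2*O.2 - A.2*B.2^2*O.1 - 2*A.2*B.1*O.2^2 + 2*A.2*B.1*B.2*O.2 - A.2^2*C.2*O.1 - A.2^2*C.1*O.2 + A.2^2*C.1*C.2 + A.2^2*B.2*O.1 + A.2^2*B.1*O.2 - A.2^2*B.1*B.2 - 2*A.1*C.2*O.2^2 + A.1*C.2^2*O.2 + 2*A.1*B.2*O.2^2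 - A.1*B.2^2*O.2 + 2*A.1*A.2*C.2*O.2 - A.1*A.2*C.2^2 - 2*A.1*A.2*B.2*O.2 + A.1*A.2*B.2^2) * hD' - (-B.2*C.2^2*O.1 - 2*B.2*C.1*O.2^2 + 2*B.2*C.1*C.2*O.2 + B.2^2*C.2*O.1 + B.2^2*C.1*O.2 - B.2^2*C.1*C.2 + 2*B.1*C.2*O.2^2 - B.1*C.2^2*O.2 - 2*B.1*B.2*C.2*O.2 + B.1*B.2*C.2^2 + A.2*C.2^2*O.1 + 2*A.2*C.1*O.2^2 - 2*A.2*C.1*C.2*O.2 - A.2*B.2^2*O.1 - 2*A.2*B.1*O.2^2 + 2*A.2*B.1*B.2*O.2 - A.2^2*C.2*O.1 - A.2^2*C.1*O.2 + A.2^2*C.1*C.2 + A.2^2*B.2*O.1 + A.2^2*B.1*O.2 - A.2^2*B.1*B.2 - 2*A.1*C.2*O.2^2 + A.1*C.2^2*O.2 + 2*A.1*B.2*O.2^2 - A.1*B.2^2*O.2 + 2*A.1*A.2*C.2*O.2 - A.1*A.2*C.2^2 - 2*A.1*A.2*B.2*O.2 + A.1*A.2*B.2^2) * hA' + (B.2*C.2^2*D.1*O.1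 - B.2*C.1*D.2^2*O.1 + 2*B.2*C.1*D.1*D.2*O.2 - 2*B.2*C.1*C.2*D.1*O.2 - B.2^2*C.2*D.1*O.1 + B.2^2*C.1*D.2*O.1 - B.2^2*C.1*D.1*D.2 + B.2^2*C.1*C.2*D.1 + B.1*C.2*D.2^2*O.1 - 2*B.1*C.2*D.1*D.2*O.2 - B.1*C.2^2*D.2*O.1 + B.1*C.2^2*D.1*D.2 + 2*B.1*C.1*C.2*D.2*O.2 - B.1*C.1*C.2*D.2^2 + 2*B.1*B.2*C.2*D.1*O.2 - B.1*B.2*C.2^2*D.1 - 2*B.1*B.2*C.1*D.2*O.2 + B.1*B.2*C.1*D.2^2 - A.2*C.2^2*D.1*O.1 + A.2*C.1*D.2^2*O.1 - 2*A.2*C.1*D.1*D.2*O.2 + 2*A.2*C.1*C.2*D.1*O.2 + A.2*B.2^2*D.1*O.1 - A.2*B.2^2*C.1*O.1 - A.2*B.1*D.2^2*O.1 + 2*A.2*B.1*D.1*D.2*O.2 + A.2*B.1*C.2^2*O.1 - 2*A.2*B.1*C.1*C.2*O.2 - 2*A.2*B.1*B.2*D.1*O.2 + 2*A.2*B.1*B.2*C.1*O.2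 + A.2^2*C.2*D.1*O.1 - A.2^2*C.1*D.2*O.1 + A.2^2*C.1*D.1*D.2 - A.2^2*C.1*C.2*D.1 - A.2^2*B.2*D.1*O.1 + A.2^2*B.2*C.1*O.1 + A.2^2*B.1*D.2*O.1 - A.2^2*B.1*D.1*D.2 - A.2^2*B.1*C.2*O.1 + A.2^2*B.1*C.1*C.2 + A.2^2*B.1*B.2*D.1 - A.2^2*B.1*B.2*C.1 - A.1*C.2*D.2^2*O.1 + 2*A.1*C.2*D.1*D.2*O.2 + A.1*C.2^2*D.2*O.1 - A.1*C.2^2*D.1*D.2 - 2*A.1*C.1*C.2*D.2*O.2 + A.1*C.1*C.2*D.2^2 + A.1*B.2*D.2^2*O.1 - 2*A.1*B.2*D.1*D.2*O.2 - A.1*B.2*C.2^2*O.1 + 2*A.1*B.2*C.1*C.2*O.2 - A.1*B.2^2*D.2*O.1 + A.1*B.2^2*D.1*D.2 + A.1*B.2^2*C.2*O.1 - A.1*B.2^2*C.1*C.2 + 2*A.1*B.1*B.2*D.2*O.2 - A.1*B.1*B.2*D.2^2 - 2*A.1*B.1*B.2*C.2*O.2 + A.1*B.1*B.2*C.2^2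 - 2*A.1*A.2*C.2*D.1*O.2 + A.1*A.2*C.2^2*D.1 + 2*A.1*A.2*C.1*D.2*O.2 - A.1*A.2*C.1*D.2^2 + 2*A.1*A.2*B.2*D.1*O.2 - 2*A.1*A.2*B.2*C.1*O.2 - A.1*A.2*B.2^2*D.1 + A.1*A.2*B.2^2*C.1 - 2*A.1*A.2*B.1*D.2*O.2 + A.1*A.2*B.1*D.2^2 + 2*A.1*A.2*B.1*C.2*O.2 - A.1*A.2*B.1*C.2^2) * e4 + (-B.2*C.2^2*D.1*O.2 + B.2*C.2^2*D.1*D.2 + B.2*C.1*D.2^2*O.2 - B.2*C.1*C.2*D.2^2 + B.2^2*C.2*D.1*O.2 - B.2^2*C.2*D.1*D.2 - B.2^2*C.1*D.2*O.2 + B.2^2*C.1*C.2*D.2 - B.1*C.2*D.2^2*O.2 + B.1*C.2^2*D.2*O.2 + B.1*B.2*C.2*D.2^2 - B.1*B.2*C.2^2*D.2 + A.2*C.2^2*D.1*O.2 - A.2*C.2^2*D.1*D.2 - A.2*C.1*D.2^2*O.2 + A.2*C.1*C.2*D.2^2 - A.2*B.2^2*D.1*O.2 + A.2*B.2^2*D.1*D.2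 + A.2*B.2^2*C.1*O.2 - A.2*B.2^2*C.1*C.2 + A.2*B.1*D.2^2*O.2 - A.2*B.1*C.2^2*O.2 - A.2*B.1*B.2*D.2^2 + A.2*B.1*B.2*C.2^2 - A.2^2*C.2*D.1*O.2 + A.2^2*C.2*D.1*D.2 + A.2^2*C.1*D.2*O.2 - A.2^2*C.1*C.2*D.2 + A.2^2*B.2*D.1*O.2 - A.2^2*B.2*D.1*D.2 - A.2^2*B.2*C.1*O.2 + A.2^2*B.2*C.1*C.2 - A.2^2*B.1*D.2*O.2 + A.2^2*B.1*C.2*O.2 + A.2^2*B.1*B.2*D.2 - A.2^2*B.1*B.2*C.2 + A.1*C.2*D.2^2*O.2 - A.1*C.2^2*D.2*O.2 - A.1*B.2*D.2^2*O.2 + A.1*B.2*C.2^2*O.2 + A.1*B.2^2*D.2*O.2 - A.1*B.2^2*C.2*O.2 - A.1*A.2*C.2*D.2^2 + A.1*A.2*C.2^2*D.2 + A.1*A.2*B.2*D.2^2 - A.1*A.2*B.2*C.2^2 - A.1*A.2*B.2^2*D.2 + A.1*A.2*B.2^2*C.2) * e5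
    have key_b : (elevenC A B C D).eval O * f.b = 0 := by
      simp only [elevenC, jacConic, prodConic, lineCf, Conic.eval]
      linear_combination (4*C.2*D.1*O.1*O.2 - 2*C.2*D.1^2*O.2 - 2*C.2^2*D.1*O.1 + C.2^2*D.1^2 - 4*C.1*D.2*O.1*O.2 + 2*C.1*D.2^2*O.1 + 2*C.1^2*D.2*O.2 - C.1^2*D.2^2 - 4*A.2*D.1*O.1*O.2 + 2*A.2*D.1^2*O.2 + 4*A.2*C.1*O.1*O.2 - 2*A.2*C.1^2*O.2 + 2*A.2^2*D.1*O.1 - A.2^2*D.1^2 - 2*A.2^2*C.1*O.1 + A.2^2*C.1^2 + 4*A.1*D.2*O.1*O.2 - 2*A.1*D.2^2*O.1 - 4*A.1*C.2*O.1*O.2 + 2*A.1*C.2^2*O.1 - 2*A.1^2*D.2*O.2 + A.1^2*D.2^2 + 2*A.1^2*C.2*O.2 - A.1^2*C.2^2) * hB' - (4*C.2*D.1*O.1*O.2 - 2*C.2*D.1^2*O.2 - 2*C.2^2*D.1*O.1 + C.2^2*D.1^2 - 4*C.1*D.2*O.1*O.2 + 2*C.1*D.2^2*O.1 + 2*C.1^2*D.2*O.2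 - C.1^2*D.2^2 - 4*A.2*D.1*O.1*O.2 + 2*A.2*D.1^2*O.2 + 4*A.2*C.1*O.1*O.2 - 2*A.2*C.1^2*O.2 + 2*A.2^2*D.1*O.1 - A.2^2*D.1^2 - 2*A.2^2*C.1*O.1 + A.2^2*C.1^2 + 4*A.1*D.2*O.1*O.2 - 2*A.1*D.2^2*O.1 - 4*A.1*C.2*O.1*O.2 + 2*A.1*C.2^2*O.1 - 2*A.1^2*D.2*O.2 + A.1^2*D.2^2 + 2*A.1^2*C.2*O.2 - A.1^2*C.2^2) * hA' + (-4*B.2*D.1*O.1*O.2 + 2*B.2*D.1^2*O.2 + 2*B.2^2*D.1*O.1 - B.2^2*D.1^2 + 4*B.1*D.2*O.1*O.2 - 2*B.1*D.2^2*O.1 - 2*B.1^2*D.2*O.2 + B.1^2*D.2^2 + 4*A.2*D.1*O.1*O.2 - 2*A.2*D.1^2*O.2 - 4*A.2*B.1*O.1*O.2 + 2*A.2*B.1^2*O.2 - 2*A.2^2*D.1*O.1 + A.2^2*D.1^2 + 2*A.2^2*B.1*O.1 - A.2^2*B.1^2 - 4*A.1*D.2*O.1*O.2 + 2*A.1*D.2^2*O.1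 + 4*A.1*B.2*O.1*O.2 - 2*A.1*B.2^2*O.1 + 2*A.1^2*D.2*O.2 - A.1^2*D.2^2 - 2*A.1^2*B.2*O.2 + A.1^2*B.2^2) * hC' - (-4*B.2*D.1*O.1*O.2 + 2*B.2*D.1^2*O.2 + 2*B.2^2*D.1*O.1 - B.2^2*D.1^2 + 4*B.1*D.2*O.1*O.2 - 2*B.1*D.2^2*O.1 - 2*B.1^2*D.2*O.2 + B.1^2*D.2^2 + 4*A.2*D.1*O.1*O.2 - 2*A.2*D.1^2*O.2 - 4*A.2*B.1*O.1*O.2 + 2*A.2*B.1^2*O.2 - 2*A.2^2*D.1*O.1 + A.2^2*D.1^2 + 2*A.2^2*B.1*O.1 - A.2^2*B.1^2 - 4*A.1*D.2*O.1*O.2 + 2*A.1*D.2^2*O.1 + 4*A.1*B.2*O.1*O.2 - 2*A.1*B.2^2*O.1 + 2*A.1^2*D.2*O.2 - A.1^2*D.2^2 - 2*A.1^2*B.2*O.2 + A.1^2*B.2^2) * hA' + (4*B.2*C.1*O.1*O.2 - 2*B.2*C.1^2*O.2 - 2*B.2^2*C.1*O.1 + B.2^2*C.1^2 - 4*B.1*C.2*O.1*O.2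 + 2*B.1*C.2^2*O.1 + 2*B.1^2*C.2*O.2 - B.1^2*C.2^2 - 4*A.2*C.1*O.1*O.2 + 2*A.2*C.1^2*O.2 + 4*A.2*B.1*O.1*O.2 - 2*A.2*B.1^2*O.2 + 2*A.2^2*C.1*O.1 - A.2^2*C.1^2 - 2*A.2^2*B.1*O.1 + A.2^2*B.1^2 + 4*A.1*C.2*O.1*O.2 - 2*A.1*C.2^2*O.1 - 4*A.1*B.2*O.1*O.2 + 2*A.1*B.2^2*O.1 - 2*A.1^2*C.2*O.2 + A.1^2*C.2^2 + 2*A.1^2*B.2*O.2 - A.1^2*B.2^2) * hD' - (4*B.2*C.1*O.1*O.2 - 2*B.2*C.1^2*O.2 - 2*B.2^2*C.1*O.1 + B.2^2*C.1^2 - 4*B.1*C.2*O.1*O.2 + 2*B.1*C.2^2*O.1 + 2*B.1^2*C.2*O.2 - B.1^2*C.2^2 - 4*A.2*C.1*O.1*O.2 + 2*A.2*C.1^2*O.2 + 4*A.2*B.1*O.1*O.2 - 2*A.2*B.1^2*O.2 + 2*A.2^2*C.1*O.1 - A.2^2*C.1^2 - 2*A.2^2*B.1*O.1 + A.2^2*B.1^2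 + 4*A.1*C.2*O.1*O.2 - 2*A.1*C.2^2*O.1 - 4*A.1*B.2*O.1*O.2 + 2*A.1*B.2^2*O.1 - 2*A.1^2*C.2*O.2 + A.1^2*C.2^2 + 2*A.1^2*B.2*O.2 - A.1^2*B.2^2) * hA' + (-2*B.2*C.1*D.1^2*O.2 + 2*B.2*C.1^2*D.1*O.2 + B.2^2*C.1*D.1^2 - B.2^2*C.1^2*D.1 + 2*B.1*C.2*D.1^2*O.2 - B.1*C.2^2*D.1^2 - 2*B.1*C.1^2*D.2*O.2 + B.1*C.1^2*D.2^2 - 2*B.1^2*C.2*D.1*O.2 + B.1^2*C.2^2*D.1 + 2*B.1^2*C.1*D.2*O.2 - B.1^2*C.1*D.2^2 + 2*A.2*C.1*D.1^2*O.2 - 2*A.2*C.1^2*D.1*O.2 - 2*A.2*B.1*D.1^2*O.2 + 2*A.2*B.1*C.1^2*O.2 + 2*A.2*B.1^2*D.1*O.2 - 2*A.2*B.1^2*C.1*O.2 - A.2^2*C.1*D.1^2 + A.2^2*C.1^2*D.1 + A.2^2*B.1*D.1^2 - A.2^2*B.1*C.1^2 - A.2^2*B.1^2*D.1 + A.2^2*B.1^2*C.1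 - 2*A.1*C.2*D.1^2*O.2 + A.1*C.2^2*D.1^2 + 2*A.1*C.1^2*D.2*O.2 - A.1*C.1^2*D.2^2 + 2*A.1*B.2*D.1^2*O.2 - 2*A.1*B.2*C.1^2*O.2 - A.1*B.2^2*D.1^2 + A.1*B.2^2*C.1^2 - 2*A.1*B.1^2*D.2*O.2 + A.1*B.1^2*D.2^2 + 2*A.1*B.1^2*C.2*O.2 - A.1*B.1^2*C.2^2 + 2*A.1^2*C.2*D.1*O.2 - A.1^2*C.2^2*D.1 - 2*A.1^2*C.1*D.2*O.2 + A.1^2*C.1*D.2^2 - 2*A.1^2*B.2*D.1*O.2 + 2*A.1^2*B.2*C.1*O.2 + A.1^2*B.2^2*D.1 - A.1^2*B.2^2*C.1 + 2*A.1^2*B.1*D.2*O.2 - A.1^2*B.1*D.2^2 - 2*A.1^2*B.1*C.2*O.2 + A.1^2*B.1*C.2^2) * e4 + (2*B.2*C.2^2*D.1*O.1 - B.2*C.2^2*D.1^2 - 2*B.2*C.1*D.2^2*O.1 + B.2*C.1^2*D.2^2 - 2*B.2^2*C.2*D.1*O.1 + B.2^2*C.2*D.1^2 + 2*B.2^2*C.1*D.2*O.1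 - B.2^2*C.1^2*D.2 + 2*B.1*C.2*D.2^2*O.1 - 2*B.1*C.2^2*D.2*O.1 - B.1^2*C.2*D.2^2 + B.1^2*C.2^2*D.2 - 2*A.2*C.2^2*D.1*O.1 + A.2*C.2^2*D.1^2 + 2*A.2*C.1*D.2^2*O.1 - A.2*C.1^2*D.2^2 + 2*A.2*B.2^2*D.1*O.1 - A.2*B.2^2*D.1^2 - 2*A.2*B.2^2*C.1*O.1 + A.2*B.2^2*C.1^2 - 2*A.2*B.1*D.2^2*O.1 + 2*A.2*B.1*C.2^2*O.1 + A.2*B.1^2*D.2^2 - A.2*B.1^2*C.2^2 + 2*A.2^2*C.2*D.1*O.1 - A.2^2*C.2*D.1^2 - 2*A.2^2*C.1*D.2*O.1 + A.2^2*C.1^2*D.2 - 2*A.2^2*B.2*D.1*O.1 + A.2^2*B.2*D.1^2 + 2*A.2^2*B.2*C.1*O.1 - A.2^2*B.2*C.1^2 + 2*A.2^2*B.1*D.2*O.1 - 2*A.2^2*B.1*C.2*O.1 - A.2^2*B.1^2*D.2 + A.2^2*B.1^2*C.2 - 2*A.1*C.2*D.2^2*O.1 + 2*A.1*C.2^2*D.2*O.1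 + 2*A.1*B.2*D.2^2*O.1 - 2*A.1*B.2*C.2^2*O.1 - 2*A.1*B.2^2*D.2*O.1 + 2*A.1*B.2^2*C.2*O.1 + A.1^2*C.2*D.2^2 - A.1^2*C.2^2*D.2 - A.1^2*B.2*D.2^2 + A.1^2*B.2*C.2^2 + A.1^2*B.2^2*D.2 - A.1^2*B.2^2*C.2) * e5
    have key_c : (elevenC A B C D).eval O * f.c = 0 := by
      simp only [elevenC, jacConic, prodConic, lineCf, Conic.eval]
      linear_combination (-2*C.2*D.1*O.1^2 + C.2*D.1^2*O.1 + 2*C.1*D.2*O.1^2 - 2*C.1*D.1*D.2*O.1 + C.1*D.1^2*O.2 + 2*C.1*C.2*D.1*O.1 - C.1*C.2*D.1^2 - C.1^2*D.2*O.1 - C.1^2*D.1*O.2 + C.1^2*D.1*D.2 + 2*A.2*D.1*O.1^2 - A.2*D.1^2*O.1 - 2*A.2*C.1*O.1^2 + A.2*C.1^2*O.1 - 2*A.1*D.2*O.1^2 + 2*A.1*D.1*D.2*O.1 - A.1*D.1^2*O.2 + 2*A.1*C.2*O.1^2 - 2*A.1*C.1*C.2*O.1 + A.1*C.1^2*O.2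 - 2*A.1*A.2*D.1*O.1 + A.1*A.2*D.1^2 + 2*A.1*A.2*C.1*O.1 - A.1*A.2*C.1^2 + A.1^2*D.2*O.1 + A.1^2*D.1*O.2 - A.1^2*D.1*D.2 - A.1^2*C.2*O.1 - A.1^2*C.1*O.2 + A.1^2*C.1*C.2) * hB' - (-2*C.2*D.1*O.1^2 + C.2*D.1^2*O.1 + 2*C.1*D.2*O.1^2 - 2*C.1*D.1*D.2*O.1 + C.1*D.1^2*O.2 + 2*C.1*C.2*D.1*O.1 - C.1*C.2*D.1^2 - C.1^2*D.2*O.1 - C.1^2*D.1*O.2 + C.1^2*D.1*D.2 + 2*A.2*D.1*O.1^2 - A.2*D.1^2*O.1 - 2*A.2*C.1*O.1^2 + A.2*C.1^2*O.1 - 2*A.1*D.2*O.1^2 + 2*A.1*D.1*D.2*O.1 - A.1*D.1^2*O.2 + 2*A.1*C.2*O.1^2 - 2*A.1*C.1*C.2*O.1 + A.1*C.1^2*O.2 - 2*A.1*A.2*D.1*O.1 + A.1*A.2*D.1^2 + 2*A.1*A.2*C.1*O.1 - A.1*A.2*C.1^2 + A.1^2*D.2*O.1 + A.1^2*D.1*O.2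 - A.1^2*D.1*D.2 - A.1^2*C.2*O.1 - A.1^2*C.1*O.2 + A.1^2*C.1*C.2) * hA' + (2*B.2*D.1*O.1^2 - B.2*D.1^2*O.1 - 2*B.1*D.2*O.1^2 + 2*B.1*D.1*D.2*O.1 - B.1*D.1^2*O.2 - 2*B.1*B.2*D.1*O.1 + B.1*B.2*D.1^2 + B.1^2*D.2*O.1 + B.1^2*D.1*O.2 - B.1^2*D.1*D.2 - 2*A.2*D.1*O.1^2 + A.2*D.1^2*O.1 + 2*A.2*B.1*O.1^2 - A.2*B.1^2*O.1 + 2*A.1*D.2*O.1^2 - 2*A.1*D.1*D.2*O.1 + A.1*D.1^2*O.2 - 2*A.1*B.2*O.1^2 + 2*A.1*B.1*B.2*O.1 - A.1*B.1^2*O.2 + 2*A.1*A.2*D.1*O.1 - A.1*A.2*D.1^2 - 2*A.1*A.2*B.1*O.1 + A.1*A.2*B.1^2 - A.1^2*D.2*O.1 - A.1^2*D.1*O.2 + A.1^2*D.1*D.2 + A.1^2*B.2*O.1 + A.1^2*B.1*O.2 - A.1^2*B.1*B.2) * hC' - (2*B.2*D.1*O.1^2 - B.2*D.1^2*O.1 -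 2*B.1*D.2*O.1^2 + 2*B.1*D.1*D.2*O.1 - B.1*D.1^2*O.2 - 2*B.1*B.2*D.1*O.1 + B.1*B.2*D.1^2 + B.1^2*D.2*O.1 + B.1^2*D.1*O.2 - B.1^2*D.1*D.2 - 2*A.2*D.1*O.1^2 + A.2*D.1^2*O.1 + 2*A.2*B.1*O.1^2 - A.2*B.1^2*O.1 + 2*A.1*D.2*O.1^2 - 2*A.1*D.1*D.2*O.1 + A.1*D.1^2*O.2 - 2*A.1*B.2*O.1^2 + 2*A.1*B.1*B.2*O.1 - A.1*B.1^2*O.2 + 2*A.1*A.2*D.1*O.1 - A.1*A.2*D.1^2 - 2*A.1*A.2*B.1*O.1 + A.1*A.2*B.1^2 - A.1^2*D.2*O.1 - A.1^2*D.1*O.2 + A.1^2*D.1*D.2 + A.1^2*B.2*O.1 + A.1^2*B.1*O.2 - A.1^2*B.1*B.2) * hA' + (-2*B.2*C.1*O.1^2 + B.2*C.1^2*O.1 + 2*B.1*C.2*O.1^2 - 2*B.1*C.1*C.2*O.1 + B.1*C.1^2*O.2 + 2*B.1*B.2*C.1*O.1 - B.1*B.2*C.1^2 - B.1^2*C.2*O.1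 - B.1^2*C.1*O.2 + B.1^2*C.1*C.2 + 2*A.2*C.1*O.1^2 - A.2*C.1^2*O.1 - 2*A.2*B.1*O.1^2 + A.2*B.1^2*O.1 - 2*A.1*C.2*O.1^2 + 2*A.1*C.1*C.2*O.1 - A.1*C.1^2*O.2 + 2*A.1*B.2*O.1^2 - 2*A.1*B.1*B.2*O.1 + A.1*B.1^2*O.2 - 2*A.1*A.2*C.1*O.1 + A.1*A.2*C.1^2 + 2*A.1*A.2*B.1*O.1 - A.1*A.2*B.1^2 + A.1^2*C.2*O.1 + A.1^2*C.1*O.2 - A.1^2*C.1*C.2 - A.1^2*B.2*O.1 - A.1^2*B.1*O.2 + A.1^2*B.1*B.2) * hD' - (-2*B.2*C.1*O.1^2 + B.2*C.1^2*O.1 + 2*B.1*C.2*O.1^2 - 2*B.1*C.1*C.2*O.1 + B.1*C.1^2*O.2 + 2*B.1*B.2*C.1*O.1 - B.1*B.2*C.1^2 - B.1^2*C.2*O.1 - B.1^2*C.1*O.2 + B.1^2*C.1*C.2 + 2*A.2*C.1*O.1^2 - A.2*C.1^2*O.1 - 2*A.2*B.1*O.1^2 + A.2*B.1^2*O.1 -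 2*A.1*C.2*O.1^2 + 2*A.1*C.1*C.2*O.1 - A.1*C.1^2*O.2 + 2*A.1*B.2*O.1^2 - 2*A.1*B.1*B.2*O.1 + A.1*B.1^2*O.2 - 2*A.1*A.2*C.1*O.1 + A.1*A.2*C.1^2 + 2*A.1*A.2*B.1*O.1 - A.1*A.2*B.1^2 + A.1^2*C.2*O.1 + A.1^2*C.1*O.2 - A.1^2*C.1*C.2 - A.1^2*B.2*O.1 - A.1^2*B.1*O.2 + A.1^2*B.1*B.2) * hA' + (B.2*C.1*D.1^2*O.1 - B.2*C.1^2*D.1*O.1 - B.1*C.2*D.1^2*O.1 + B.1*C.1*C.2*D.1^2 + B.1*C.1^2*D.2*O.1 - B.1*C.1^2*D.1*D.2 - B.1*B.2*C.1*D.1^2 + B.1*B.2*C.1^2*D.1 + B.1^2*C.2*D.1*O.1 - B.1^2*C.1*D.2*O.1 + B.1^2*C.1*D.1*D.2 - B.1^2*C.1*C.2*D.1 - A.2*C.1*D.1^2*O.1 + A.2*C.1^2*D.1*O.1 + A.2*B.1*D.1^2*O.1 - A.2*B.1*C.1^2*O.1 - A.2*B.1^2*D.1*O.1 + A.2*B.1^2*C.1*O.1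 + A.1*C.2*D.1^2*O.1 - A.1*C.1*C.2*D.1^2 - A.1*C.1^2*D.2*O.1 + A.1*C.1^2*D.1*D.2 - A.1*B.2*D.1^2*O.1 + A.1*B.2*C.1^2*O.1 + A.1*B.1*B.2*D.1^2 - A.1*B.1*B.2*C.1^2 + A.1*B.1^2*D.2*O.1 - A.1*B.1^2*D.1*D.2 - A.1*B.1^2*C.2*O.1 + A.1*B.1^2*C.1*C.2 + A.1*A.2*C.1*D.1^2 - A.1*A.2*C.1^2*D.1 - A.1*A.2*B.1*D.1^2 + A.1*A.2*B.1*C.1^2 + A.1*A.2*B.1^2*D.1 - A.1*A.2*B.1^2*C.1 - A.1^2*C.2*D.1*O.1 + A.1^2*C.1*D.2*O.1 - A.1^2*C.1*D.1*D.2 + A.1^2*C.1*C.2*D.1 + A.1^2*B.2*D.1*O.1 - A.1^2*B.2*C.1*O.1 - A.1^2*B.1*D.2*O.1 + A.1^2*B.1*D.1*D.2 + A.1^2*B.1*C.2*O.1 - A.1^2*B.1*C.1*C.2 - A.1^2*B.1*B.2*D.1 + A.1^2*B.1*B.2*C.1) * e4 + (2*B.2*C.1*D.1*D.2*O.1 -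 B.2*C.1*D.1^2*O.2 - 2*B.2*C.1*C.2*D.1*O.1 + B.2*C.1*C.2*D.1^2 + B.2*C.1^2*D.1*O.2 - B.2*C.1^2*D.1*D.2 - 2*B.1*C.2*D.1*D.2*O.1 + B.1*C.2*D.1^2*O.2 + 2*B.1*C.1*C.2*D.2*O.1 - B.1*C.1^2*D.2*O.2 + 2*B.1*B.2*C.2*D.1*O.1 - B.1*B.2*C.2*D.1^2 - 2*B.1*B.2*C.1*D.2*O.1 + B.1*B.2*C.1^2*D.2 - B.1^2*C.2*D.1*O.2 + B.1^2*C.2*D.1*D.2 + B.1^2*C.1*D.2*O.2 - B.1^2*C.1*C.2*D.2 - 2*A.2*C.1*D.1*D.2*O.1 + A.2*C.1*D.1^2*O.2 + 2*A.2*C.1*C.2*D.1*O.1 - A.2*C.1*C.2*D.1^2 - A.2*C.1^2*D.1*O.2 + A.2*C.1^2*D.1*D.2 + 2*A.2*B.1*D.1*D.2*O.1 - A.2*B.1*D.1^2*O.2 - 2*A.2*B.1*C.1*C.2*O.1 + A.2*B.1*C.1^2*O.2 - 2*A.2*B.1*B.2*D.1*O.1 + A.2*B.1*B.2*D.1^2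 + 2*A.2*B.1*B.2*C.1*O.1 - A.2*B.1*B.2*C.1^2 + A.2*B.1^2*D.1*O.2 - A.2*B.1^2*D.1*D.2 - A.2*B.1^2*C.1*O.2 + A.2*B.1^2*C.1*C.2 + 2*A.1*C.2*D.1*D.2*O.1 - A.1*C.2*D.1^2*O.2 - 2*A.1*C.1*C.2*D.2*O.1 + A.1*C.1^2*D.2*O.2 - 2*A.1*B.2*D.1*D.2*O.1 + A.1*B.2*D.1^2*O.2 + 2*A.1*B.2*C.1*C.2*O.1 - A.1*B.2*C.1^2*O.2 + 2*A.1*B.1*B.2*D.2*O.1 - 2*A.1*B.1*B.2*C.2*O.1 - A.1*B.1^2*D.2*O.2 + A.1*B.1^2*C.2*O.2 - 2*A.1*A.2*C.2*D.1*O.1 + A.1*A.2*C.2*D.1^2 + 2*A.1*A.2*C.1*D.2*O.1 - A.1*A.2*C.1^2*D.2 + 2*A.1*A.2*B.2*D.1*O.1 - A.1*A.2*B.2*D.1^2 - 2*A.1*A.2*B.2*C.1*O.1 + A.1*A.2*B.2*C.1^2 - 2*A.1*A.2*B.1*D.2*O.1 + 2*A.1*A.2*B.1*C.2*O.1 + A.1*A.2*B.1^2*D.2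 - A.1*A.2*B.1^2*C.2 + A.1^2*C.2*D.1*O.2 - A.1^2*C.2*D.1*D.2 - A.1^2*C.1*D.2*O.2 + A.1^2*C.1*C.2*D.2 - A.1^2*B.2*D.1*O.2 + A.1^2*B.2*D.1*D.2 + A.1^2*B.2*C.1*O.2 - A.1^2*B.2*C.1*C.2 + A.1^2*B.1*D.2*O.2 - A.1^2*B.1*C.2*O.2 - A.1^2*B.1*B.2*D.2 + A.1^2*B.1*B.2*C.2) * e5
    have key_d : (elevenC A B C D).eval O * f.d = 0 := by
      simp only [elevenC, jacConic, prodConic, lineCf, Conic.eval]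
      linear_combination (2*C.2*D.2^2*O.1^2 - 4*C.2*D.1*D.2*O.1*O.2 + 2*C.2*D.1^2*O.2^2 - 2*C.2^2*D.2*O.1^2 + 2*C.2^2*D.1*D.2*O.1 - C.2^2*D.1^2*O.2 + 4*C.1*C.2*D.2*O.1*O.2 - 2*C.1*C.2*D.2^2*O.1 - 2*C.1^2*D.2*O.2^2 + C.1^2*D.2^2*O.2 - 2*A.2*D.2^2*O.1^2 + 4*A.2*D.1*D.2*O.1*O.2 - 2*A.2*D.1^2*O.2^2 + 2*A.2*C.2^2*O.1^2 - 4*A.2*C.1*C.2*O.1*O.2 + 2*A.2*C.1^2*O.2^2 + 2*A.2^2*D.2*O.1^2 - 2*A.2^2*D.1*D.2*O.1 + A.2^2*D.1^2*O.2 - 2*A.2^2*C.2*O.1^2 + 2*A.2^2*C.1*C.2*O.1 - A.2^2*C.1^2*O.2 - 4*A.1*A.2*D.2*O.1*O.2 + 2*A.1*A.2*D.2^2*O.1 + 4*A.1*A.2*C.2*O.1*O.2 - 2*A.1*A.2*C.2^2*O.1 + 2*A.1^2*D.2*O.2^2 - A.1^2*D.2^2*O.2 - 2*A.1^2*C.2*O.2^2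 + A.1^2*C.2^2*O.2) * hB' - (2*C.2*D.2^2*O.1^2 - 4*C.2*D.1*D.2*O.1*O.2 + 2*C.2*D.1^2*O.2^2 - 2*C.2^2*D.2*O.1^2 + 2*C.2^2*D.1*D.2*O.1 - C.2^2*D.1^2*O.2 + 4*C.1*C.2*D.2*O.1*O.2 - 2*C.1*C.2*D.2^2*O.1 - 2*C.1^2*D.2*O.2^2 + C.1^2*D.2^2*O.2 - 2*A.2*D.2^2*O.1^2 + 4*A.2*D.1*D.2*O.1*O.2 - 2*A.2*D.1^2*O.2^2 + 2*A.2*C.2^2*O.1^2 - 4*A.2*C.1*C.2*O.1*O.2 + 2*A.2*C.1^2*O.2^2 + 2*A.2^2*D.2*O.1^2 - 2*A.2^2*D.1*D.2*O.1 + A.2^2*D.1^2*O.2 - 2*A.2^2*C.2*O.1^2 + 2*A.2^2*C.1*C.2*O.1 - A.2^2*C.1^2*O.2 - 4*A.1*A.2*D.2*O.1*O.2 + 2*A.1*A.2*D.2^2*O.1 + 4*A.1*A.2*C.2*O.1*O.2 - 2*A.1*A.2*C.2^2*O.1 + 2*A.1^2*D.2*O.2^2 - A.1^2*D.2^2*O.2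 - 2*A.1^2*C.2*O.2^2 + A.1^2*C.2^2*O.2) * hA' + (-2*B.2*D.2^2*O.1^2 + 4*B.2*D.1*D.2*O.1*O.2 - 2*B.2*D.1^2*O.2^2 + 2*B.2^2*D.2*O.1^2 - 2*B.2^2*D.1*D.2*O.1 + B.2^2*D.1^2*O.2 - 4*B.1*B.2*D.2*O.1*O.2 + 2*B.1*B.2*D.2^2*O.1 + 2*B.1^2*D.2*O.2^2 - B.1^2*D.2^2*O.2 + 2*A.2*D.2^2*O.1^2 - 4*A.2*D.1*D.2*O.1*O.2 + 2*A.2*D.1^2*O.2^2 - 2*A.2*B.2^2*O.1^2 + 4*A.2*B.1*B.2*O.1*O.2 - 2*A.2*B.1^2*O.2^2 - 2*A.2^2*D.2*O.1^2 + 2*A.2^2*D.1*D.2*O.1 - A.2^2*D.1^2*O.2 + 2*A.2^2*B.2*O.1^2 - 2*A.2^2*B.1*B.2*O.1 + A.2^2*B.1^2*O.2 + 4*A.1*A.2*D.2*O.1*O.2 - 2*A.1*A.2*D.2^2*O.1 - 4*A.1*A.2*B.2*O.1*O.2 + 2*A.1*A.2*B.2^2*O.1 - 2*A.1^2*D.2*O.2^2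 + A.1^2*D.2^2*O.2 + 2*A.1^2*B.2*O.2^2 - A.1^2*B.2^2*O.2) * hC' - (-2*B.2*D.2^2*O.1^2 + 4*B.2*D.1*D.2*O.1*O.2 - 2*B.2*D.1^2*O.2^2 + 2*B.2^2*D.2*O.1^2 - 2*B.2^2*D.1*D.2*O.1 + B.2^2*D.1^2*O.2 - 4*B.1*B.2*D.2*O.1*O.2 + 2*B.1*B.2*D.2^2*O.1 + 2*B.1^2*D.2*O.2^2 - B.1^2*D.2^2*O.2 + 2*A.2*D.2^2*O.1^2 - 4*A.2*D.1*D.2*O.1*O.2 + 2*A.2*D.1^2*O.2^2 - 2*A.2*B.2^2*O.1^2 + 4*A.2*B.1*B.2*O.1*O.2 - 2*A.2*B.1^2*O.2^2 - 2*A.2^2*D.2*O.1^2 + 2*A.2^2*D.1*D.2*O.1 - A.2^2*D.1^2*O.2 + 2*A.2^2*B.2*O.1^2 - 2*A.2^2*B.1*B.2*O.1 + A.2^2*B.1^2*O.2 + 4*A.1*A.2*D.2*O.1*O.2 - 2*A.1*A.2*D.2^2*O.1 - 4*A.1*A.2*B.2*O.1*O.2 + 2*A.1*A.2*B.2^2*O.1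 - 2*A.1^2*D.2*O.2^2 + A.1^2*D.2^2*O.2 + 2*A.1^2*B.2*O.2^2 - A.1^2*B.2^2*O.2) * hA' + (2*B.2*C.2^2*O.1^2 - 4*B.2*C.1*C.2*O.1*O.2 + 2*B.2*C.1^2*O.2^2 - 2*B.2^2*C.2*O.1^2 + 2*B.2^2*C.1*C.2*O.1 - B.2^2*C.1^2*O.2 + 4*B.1*B.2*C.2*O.1*O.2 - 2*B.1*B.2*C.2^2*O.1 - 2*B.1^2*C.2*O.2^2 + B.1^2*C.2^2*O.2 - 2*A.2*C.2^2*O.1^2 + 4*A.2*C.1*C.2*O.1*O.2 - 2*A.2*C.1^2*O.2^2 + 2*A.2*B.2^2*O.1^2 - 4*A.2*B.1*B.2*O.1*O.2 + 2*A.2*B.1^2*O.2^2 + 2*A.2^2*C.2*O.1^2 - 2*A.2^2*C.1*C.2*O.1 + A.2^2*C.1^2*O.2 - 2*A.2^2*B.2*O.1^2 + 2*A.2^2*B.1*B.2*O.1 - A.2^2*B.1^2*O.2 - 4*A.1*A.2*C.2*O.1*O.2 + 2*A.1*A.2*C.2^2*O.1 + 4*A.1*A.2*B.2*O.1*O.2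 - 2*A.1*A.2*B.2^2*O.1 + 2*A.1^2*C.2*O.2^2 - A.1^2*C.2^2*O.2 - 2*A.1^2*B.2*O.2^2 + A.1^2*B.2^2*O.2) * hD' - (2*B.2*C.2^2*O.1^2 - 4*B.2*C.1*C.2*O.1*O.2 + 2*B.2*C.1^2*O.2^2 - 2*B.2^2*C.2*O.1^2 + 2*B.2^2*C.1*C.2*O.1 - B.2^2*C.1^2*O.2 + 4*B.1*B.2*C.2*O.1*O.2 - 2*B.1*B.2*C.2^2*O.1 - 2*B.1^2*C.2*O.2^2 + B.1^2*C.2^2*O.2 - 2*A.2*C.2^2*O.1^2 + 4*A.2*C.1*C.2*O.1*O.2 - 2*A.2*C.1^2*O.2^2 + 2*A.2*B.2^2*O.1^2 - 4*A.2*B.1*B.2*O.1*O.2 + 2*A.2*B.1^2*O.2^2 + 2*A.2^2*C.2*O.1^2 - 2*A.2^2*C.1*C.2*O.1 + A.2^2*C.1^2*O.2 - 2*A.2^2*B.2*O.1^2 + 2*A.2^2*B.1*B.2*O.1 - A.2^2*B.1^2*O.2 - 4*A.1*A.2*C.2*O.1*O.2 + 2*A.1*A.2*C.2^2*O.1 +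 4*A.1*A.2*B.2*O.1*O.2 - 2*A.1*A.2*B.2^2*O.1 + 2*A.1^2*C.2*O.2^2 - A.1^2*C.2^2*O.2 - 2*A.1^2*B.2*O.2^2 + A.1^2*B.2^2*O.2) * hA' + (-B.2*C.2^2*D.1^2*O.1 + 2*B.2*C.1*C.2*D.1^2*O.2 + B.2*C.1^2*D.2^2*O.1 - 2*B.2*C.1^2*D.1*D.2*O.2 + B.2^2*C.2*D.1^2*O.1 - B.2^2*C.1*C.2*D.1^2 - B.2^2*C.1^2*D.2*O.1 + B.2^2*C.1^2*D.1*D.2 - 2*B.1*B.2*C.2*D.1^2*O.2 + B.1*B.2*C.2^2*D.1^2 + 2*B.1*B.2*C.1^2*D.2*O.2 - B.1*B.2*C.1^2*D.2^2 - B.1^2*C.2*D.2^2*O.1 + 2*B.1^2*C.2*D.1*D.2*O.2 + B.1^2*C.2^2*D.2*O.1 - B.1^2*C.2^2*D.1*D.2 - 2*B.1^2*C.1*C.2*D.2*O.2 + B.1^2*C.1*C.2*D.2^2 + A.2*C.2^2*D.1^2*O.1 - 2*A.2*C.1*C.2*D.1^2*O.2 - A.2*C.1^2*D.2^2*O.1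 + 2*A.2*C.1^2*D.1*D.2*O.2 - A.2*B.2^2*D.1^2*O.1 + A.2*B.2^2*C.1^2*O.1 + 2*A.2*B.1*B.2*D.1^2*O.2 - 2*A.2*B.1*B.2*C.1^2*O.2 + A.2*B.1^2*D.2^2*O.1 - 2*A.2*B.1^2*D.1*D.2*O.2 - A.2*B.1^2*C.2^2*O.1 + 2*A.2*B.1^2*C.1*C.2*O.2 - A.2^2*C.2*D.1^2*O.1 + A.2^2*C.1*C.2*D.1^2 + A.2^2*C.1^2*D.2*O.1 - A.2^2*C.1^2*D.1*D.2 + A.2^2*B.2*D.1^2*O.1 - A.2^2*B.2*C.1^2*O.1 - A.2^2*B.1*B.2*D.1^2 + A.2^2*B.1*B.2*C.1^2 - A.2^2*B.1^2*D.2*O.1 + A.2^2*B.1^2*D.1*D.2 + A.2^2*B.1^2*C.2*O.1 - A.2^2*B.1^2*C.1*C.2 + 2*A.1*A.2*C.2*D.1^2*O.2 - A.1*A.2*C.2^2*D.1^2 - 2*A.1*A.2*C.1^2*D.2*O.2 + A.1*A.2*C.1^2*D.2^2 - 2*A.1*A.2*B.2*D.1^2*O.2 + 2*A.1*A.2*B.2*C.1^2*O.2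 + A.1*A.2*B.2^2*D.1^2 - A.1*A.2*B.2^2*C.1^2 + 2*A.1*A.2*B.1^2*D.2*O.2 - A.1*A.2*B.1^2*D.2^2 - 2*A.1*A.2*B.1^2*C.2*O.2 + A.1*A.2*B.1^2*C.2^2 + A.1^2*C.2*D.2^2*O.1 - 2*A.1^2*C.2*D.1*D.2*O.2 - A.1^2*C.2^2*D.2*O.1 + A.1^2*C.2^2*D.1*D.2 + 2*A.1^2*C.1*C.2*D.2*O.2 - A.1^2*C.1*C.2*D.2^2 - A.1^2*B.2*D.2^2*O.1 + 2*A.1^2*B.2*D.1*D.2*O.2 + A.1^2*B.2*C.2^2*O.1 - 2*A.1^2*B.2*C.1*C.2*O.2 + A.1^2*B.2^2*D.2*O.1 - A.1^2*B.2^2*D.1*D.2 - A.1^2*B.2^2*C.2*O.1 + A.1^2*B.2^2*C.1*C.2 - 2*A.1^2*B.1*B.2*D.2*O.2 + A.1^2*B.1*B.2*D.2^2 + 2*A.1^2*B.1*B.2*C.2*O.2 - A.1^2*B.1*B.2*C.2^2) * e4 + (-2*B.2*C.2^2*D.1*D.2*O.1 + B.2*C.2^2*D.1^2*O.2 + 2*B.2*C.1*C.2*D.2^2*O.1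 - B.2*C.1^2*D.2^2*O.2 + 2*B.2^2*C.2*D.1*D.2*O.1 - B.2^2*C.2*D.1^2*O.2 - 2*B.2^2*C.1*C.2*D.2*O.1 + B.2^2*C.1^2*D.2*O.2 - 2*B.1*B.2*C.2*D.2^2*O.1 + 2*B.1*B.2*C.2^2*D.2*O.1 + B.1^2*C.2*D.2^2*O.2 - B.1^2*C.2^2*D.2*O.2 + 2*A.2*C.2^2*D.1*D.2*O.1 - A.2*C.2^2*D.1^2*O.2 - 2*A.2*C.1*C.2*D.2^2*O.1 + A.2*C.1^2*D.2^2*O.2 - 2*A.2*B.2^2*D.1*D.2*O.1 + A.2*B.2^2*D.1^2*O.2 + 2*A.2*B.2^2*C.1*C.2*O.1 - A.2*B.2^2*C.1^2*O.2 + 2*A.2*B.1*B.2*D.2^2*O.1 - 2*A.2*B.1*B.2*C.2^2*O.1 - A.2*B.1^2*D.2^2*O.2 + A.2*B.1^2*C.2^2*O.2 - 2*A.2^2*C.2*D.1*D.2*O.1 + A.2^2*C.2*D.1^2*O.2 + 2*A.2^2*C.1*C.2*D.2*O.1 - A.2^2*C.1^2*D.2*O.2 + 2*A.2^2*B.2*D.1*D.2*O.1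 - A.2^2*B.2*D.1^2*O.2 - 2*A.2^2*B.2*C.1*C.2*O.1 + A.2^2*B.2*C.1^2*O.2 - 2*A.2^2*B.1*B.2*D.2*O.1 + 2*A.2^2*B.1*B.2*C.2*O.1 + A.2^2*B.1^2*D.2*O.2 - A.2^2*B.1^2*C.2*O.2 + 2*A.1*A.2*C.2*D.2^2*O.1 - 2*A.1*A.2*C.2^2*D.2*O.1 - 2*A.1*A.2*B.2*D.2^2*O.1 + 2*A.1*A.2*B.2*C.2^2*O.1 + 2*A.1*A.2*B.2^2*D.2*O.1 - 2*A.1*A.2*B.2^2*C.2*O.1 - A.1^2*C.2*D.2^2*O.2 + A.1^2*C.2^2*D.2*O.2 + A.1^2*B.2*D.2^2*O.2 - A.1^2*B.2*C.2^2*O.2 - A.1^2*B.2^2*D.2*O.2 + A.1^2*B.2^2*C.2*O.2) * e5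
    have key_e : (elevenC A B C D).eval O * f.e = 0 := by
      simp only [elevenC, jacConic, prodConic, lineCf, Conic.eval]
      linear_combination (2*C.2^2*D.1*O.1^2 - C.2^2*D.1^2*O.1 - 2*C.1*D.2^2*O.1^2 + 4*C.1*D.1*D.2*O.1*O.2 - 2*C.1*D.1^2*O.2^2 - 4*C.1*C.2*D.1*O.1*O.2 + 2*C.1*C.2*D.1^2*O.2 + C.1^2*D.2^2*O.1 + 2*C.1^2*D.1*O.2^2 - 2*C.1^2*D.1*D.2*O.2 - 2*A.2^2*D.1*O.1^2 + A.2^2*D.1^2*O.1 + 2*A.2^2*C.1*O.1^2 - A.2^2*C.1^2*O.1 + 2*A.1*D.2^2*O.1^2 - 4*A.1*D.1*D.2*O.1*O.2 + 2*A.1*D.1^2*O.2^2 - 2*A.1*C.2^2*O.1^2 + 4*A.1*C.1*C.2*O.1*O.2 - 2*A.1*C.1^2*O.2^2 + 4*A.1*A.2*D.1*O.1*O.2 - 2*A.1*A.2*D.1^2*O.2 - 4*A.1*A.2*C.1*O.1*O.2 + 2*A.1*A.2*C.1^2*O.2 - A.1^2*D.2^2*O.1 - 2*A.1^2*D.1*O.2^2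 + 2*A.1^2*D.1*D.2*O.2 + A.1^2*C.2^2*O.1 + 2*A.1^2*C.1*O.2^2 - 2*A.1^2*C.1*C.2*O.2) * hB' - (2*C.2^2*D.1*O.1^2 - C.2^2*D.1^2*O.1 - 2*C.1*D.2^2*O.1^2 + 4*C.1*D.1*D.2*O.1*O.2 - 2*C.1*D.1^2*O.2^2 - 4*C.1*C.2*D.1*O.1*O.2 + 2*C.1*C.2*D.1^2*O.2 + C.1^2*D.2^2*O.1 + 2*C.1^2*D.1*O.2^2 - 2*C.1^2*D.1*D.2*O.2 - 2*A.2^2*D.1*O.1^2 + A.2^2*D.1^2*O.1 + 2*A.2^2*C.1*O.1^2 - A.2^2*C.1^2*O.1 + 2*A.1*D.2^2*O.1^2 - 4*A.1*D.1*D.2*O.1*O.2 + 2*A.1*D.1^2*O.2^2 - 2*A.1*C.2^2*O.1^2 + 4*A.1*C.1*C.2*O.1*O.2 - 2*A.1*C.1^2*O.2^2 + 4*A.1*A.2*D.1*O.1*O.2 - 2*A.1*A.2*D.1^2*O.2 - 4*A.1*A.2*C.1*O.1*O.2 + 2*A.1*A.2*C.1^2*O.2 - A.1^2*D.2^2*O.1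 - 2*A.1^2*D.1*O.2^2 + 2*A.1^2*D.1*D.2*O.2 + A.1^2*C.2^2*O.1 + 2*A.1^2*C.1*O.2^2 - 2*A.1^2*C.1*C.2*O.2) * hA' + (-2*B.2^2*D.1*O.1^2 + B.2^2*D.1^2*O.1 + 2*B.1*D.2^2*O.1^2 - 4*B.1*D.1*D.2*O.1*O.2 + 2*B.1*D.1^2*O.2^2 + 4*B.1*B.2*D.1*O.1*O.2 - 2*B.1*B.2*D.1^2*O.2 - B.1^2*D.2^2*O.1 - 2*B.1^2*D.1*O.2^2 + 2*B.1^2*D.1*D.2*O.2 + 2*A.2^2*D.1*O.1^2 - A.2^2*D.1^2*O.1 - 2*A.2^2*B.1*O.1^2 + A.2^2*B.1^2*O.1 - 2*A.1*D.2^2*O.1^2 + 4*A.1*D.1*D.2*O.1*O.2 - 2*A.1*D.1^2*O.2^2 + 2*A.1*B.2^2*O.1^2 - 4*A.1*B.1*B.2*O.1*O.2 + 2*A.1*B.1^2*O.2^2 - 4*A.1*A.2*D.1*O.1*O.2 + 2*A.1*A.2*D.1^2*O.2 + 4*A.1*A.2*B.1*O.1*O.2 - 2*A.1*A.2*B.1^2*O.2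 + A.1^2*D.2^2*O.1 + 2*A.1^2*D.1*O.2^2 - 2*A.1^2*D.1*D.2*O.2 - A.1^2*B.2^2*O.1 - 2*A.1^2*B.1*O.2^2 + 2*A.1^2*B.1*B.2*O.2) * hC' - (-2*B.2^2*D.1*O.1^2 + B.2^2*D.1^2*O.1 + 2*B.1*D.2^2*O.1^2 - 4*B.1*D.1*D.2*O.1*O.2 + 2*B.1*D.1^2*O.2^2 + 4*B.1*B.2*D.1*O.1*O.2 - 2*B.1*B.2*D.1^2*O.2 - B.1^2*D.2^2*O.1 - 2*B.1^2*D.1*O.2^2 + 2*B.1^2*D.1*D.2*O.2 + 2*A.2^2*D.1*O.1^2 - A.2^2*D.1^2*O.1 - 2*A.2^2*B.1*O.1^2 + A.2^2*B.1^2*O.1 - 2*A.1*D.2^2*O.1^2 + 4*A.1*D.1*D.2*O.1*O.2 - 2*A.1*D.1^2*O.2^2 + 2*A.1*B.2^2*O.1^2 - 4*A.1*B.1*B.2*O.1*O.2 + 2*A.1*B.1^2*O.2^2 - 4*A.1*A.2*D.1*O.1*O.2 + 2*A.1*A.2*D.1^2*O.2 + 4*A.1*A.2*B.1*O.1*O.2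 - 2*A.1*A.2*B.1^2*O.2 + A.1^2*D.2^2*O.1 + 2*A.1^2*D.1*O.2^2 - 2*A.1^2*D.1*D.2*O.2 - A.1^2*B.2^2*O.1 - 2*A.1^2*B.1*O.2^2 + 2*A.1^2*B.1*B.2*O.2) * hA' + (2*B.2^2*C.1*O.1^2 - B.2^2*C.1^2*O.1 - 2*B.1*C.2^2*O.1^2 + 4*B.1*C.1*C.2*O.1*O.2 - 2*B.1*C.1^2*O.2^2 - 4*B.1*B.2*C.1*O.1*O.2 + 2*B.1*B.2*C.1^2*O.2 + B.1^2*C.2^2*O.1 + 2*B.1^2*C.1*O.2^2 - 2*B.1^2*C.1*C.2*O.2 - 2*A.2^2*C.1*O.1^2 + A.2^2*C.1^2*O.1 + 2*A.2^2*B.1*O.1^2 - A.2^2*B.1^2*O.1 + 2*A.1*C.2^2*O.1^2 - 4*A.1*C.1*C.2*O.1*O.2 + 2*A.1*C.1^2*O.2^2 - 2*A.1*B.2^2*O.1^2 + 4*A.1*B.1*B.2*O.1*O.2 - 2*A.1*B.1^2*O.2^2 + 4*A.1*A.2*C.1*O.1*O.2 - 2*A.1*A.2*C.1^2*O.2 -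 4*A.1*A.2*B.1*O.1*O.2 + 2*A.1*A.2*B.1^2*O.2 - A.1^2*C.2^2*O.1 - 2*A.1^2*C.1*O.2^2 + 2*A.1^2*C.1*C.2*O.2 + A.1^2*B.2^2*O.1 + 2*A.1^2*B.1*O.2^2 - 2*A.1^2*B.1*B.2*O.2) * hD' - (2*B.2^2*C.1*O.1^2 - B.2^2*C.1^2*O.1 - 2*B.1*C.2^2*O.1^2 + 4*B.1*C.1*C.2*O.1*O.2 - 2*B.1*C.1^2*O.2^2 - 4*B.1*B.2*C.1*O.1*O.2 + 2*B.1*B.2*C.1^2*O.2 + B.1^2*C.2^2*O.1 + 2*B.1^2*C.1*O.2^2 - 2*B.1^2*C.1*C.2*O.2 - 2*A.2^2*C.1*O.1^2 + A.2^2*C.1^2*O.1 + 2*A.2^2*B.1*O.1^2 - A.2^2*B.1^2*O.1 + 2*A.1*C.2^2*O.1^2 - 4*A.1*C.1*C.2*O.1*O.2 + 2*A.1*C.1^2*O.2^2 - 2*A.1*B.2^2*O.1^2 + 4*A.1*B.1*B.2*O.1*O.2 - 2*A.1*B.1^2*O.2^2 + 4*A.1*A.2*C.1*O.1*O.2 -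 2*A.1*A.2*C.1^2*O.2 - 4*A.1*A.2*B.1*O.1*O.2 + 2*A.1*A.2*B.1^2*O.2 - A.1^2*C.2^2*O.1 - 2*A.1^2*C.1*O.2^2 + 2*A.1^2*C.1*C.2*O.2 + A.1^2*B.2^2*O.1 + 2*A.1^2*B.1*O.2^2 - 2*A.1^2*B.1*B.2*O.2) * hA' + (-B.2^2*C.1*D.1^2*O.1 + B.2^2*C.1^2*D.1*O.1 + B.1*C.2^2*D.1^2*O.1 - 2*B.1*C.1*C.2*D.1^2*O.2 - B.1*C.1^2*D.2^2*O.1 + 2*B.1*C.1^2*D.1*D.2*O.2 + 2*B.1*B.2*C.1*D.1^2*O.2 - 2*B.1*B.2*C.1^2*D.1*O.2 - B.1^2*C.2^2*D.1*O.1 + B.1^2*C.1*D.2^2*O.1 - 2*B.1^2*C.1*D.1*D.2*O.2 + 2*B.1^2*C.1*C.2*D.1*O.2 + A.2^2*C.1*D.1^2*O.1 - A.2^2*C.1^2*D.1*O.1 - A.2^2*B.1*D.1^2*O.1 + A.2^2*B.1*C.1^2*O.1 + A.2^2*B.1^2*D.1*O.1 - A.2^2*B.1^2*C.1*O.1 -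 A.1*C.2^2*D.1^2*O.1 + 2*A.1*C.1*C.2*D.1^2*O.2 + A.1*C.1^2*D.2^2*O.1 - 2*A.1*C.1^2*D.1*D.2*O.2 + A.1*B.2^2*D.1^2*O.1 - A.1*B.2^2*C.1^2*O.1 - 2*A.1*B.1*B.2*D.1^2*O.2 + 2*A.1*B.1*B.2*C.1^2*O.2 - A.1*B.1^2*D.2^2*O.1 + 2*A.1*B.1^2*D.1*D.2*O.2 + A.1*B.1^2*C.2^2*O.1 - 2*A.1*B.1^2*C.1*C.2*O.2 - 2*A.1*A.2*C.1*D.1^2*O.2 + 2*A.1*A.2*C.1^2*D.1*O.2 + 2*A.1*A.2*B.1*D.1^2*O.2 - 2*A.1*A.2*B.1*C.1^2*O.2 - 2*A.1*A.2*B.1^2*D.1*O.2 + 2*A.1*A.2*B.1^2*C.1*O.2 + A.1^2*C.2^2*D.1*O.1 - A.1^2*C.1*D.2^2*O.1 + 2*A.1^2*C.1*D.1*D.2*O.2 - 2*A.1^2*C.1*C.2*D.1*O.2 - A.1^2*B.2^2*D.1*O.1 + A.1^2*B.2^2*C.1*O.1 + A.1^2*B.1*D.2^2*O.1 - 2*A.1^2*B.1*D.1*D.2*O.2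 - A.1^2*B.1*C.2^2*O.1 + 2*A.1^2*B.1*C.1*C.2*O.2 + 2*A.1^2*B.1*B.2*D.1*O.2 - 2*A.1^2*B.1*B.2*C.1*O.2) * e4 + (-2*B.2^2*C.1*D.1*D.2*O.1 + B.2^2*C.1*D.1^2*O.2 + 2*B.2^2*C.1*C.2*D.1*O.1 - B.2^2*C.1*C.2*D.1^2 - B.2^2*C.1^2*D.1*O.2 + B.2^2*C.1^2*D.1*D.2 + 2*B.1*C.2^2*D.1*D.2*O.1 - B.1*C.2^2*D.1^2*O.2 - 2*B.1*C.1*C.2*D.2^2*O.1 + B.1*C.1^2*D.2^2*O.2 - 2*B.1*B.2*C.2^2*D.1*O.1 + B.1*B.2*C.2^2*D.1^2 + 2*B.1*B.2*C.1*D.2^2*O.1 - B.1*B.2*C.1^2*D.2^2 + B.1^2*C.2^2*D.1*O.2 - B.1^2*C.2^2*D.1*D.2 - B.1^2*C.1*D.2^2*O.2 + B.1^2*C.1*C.2*D.2^2 + 2*A.2^2*C.1*D.1*D.2*O.1 - A.2^2*C.1*D.1^2*O.2 - 2*A.2^2*C.1*C.2*D.1*O.1 + A.2^2*C.1*C.2*D.1^2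 + A.2^2*C.1^2*D.1*O.2 - A.2^2*C.1^2*D.1*D.2 - 2*A.2^2*B.1*D.1*D.2*O.1 + A.2^2*B.1*D.1^2*O.2 + 2*A.2^2*B.1*C.1*C.2*O.1 - A.2^2*B.1*C.1^2*O.2 + 2*A.2^2*B.1*B.2*D.1*O.1 - A.2^2*B.1*B.2*D.1^2 - 2*A.2^2*B.1*B.2*C.1*O.1 + A.2^2*B.1*B.2*C.1^2 - A.2^2*B.1^2*D.1*O.2 + A.2^2*B.1^2*D.1*D.2 + A.2^2*B.1^2*C.1*O.2 - A.2^2*B.1^2*C.1*C.2 - 2*A.1*C.2^2*D.1*D.2*O.1 + A.1*C.2^2*D.1^2*O.2 + 2*A.1*C.1*C.2*D.2^2*O.1 - A.1*C.1^2*D.2^2*O.2 + 2*A.1*B.2^2*D.1*D.2*O.1 - A.1*B.2^2*D.1^2*O.2 - 2*A.1*B.2^2*C.1*C.2*O.1 + A.1*B.2^2*C.1^2*O.2 - 2*A.1*B.1*B.2*D.2^2*O.1 + 2*A.1*B.1*B.2*C.2^2*O.1 + A.1*B.1^2*D.2^2*O.2 - A.1*B.1^2*C.2^2*O.2 + 2*A.1*A.2*C.2^2*D.1*O.1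 - A.1*A.2*C.2^2*D.1^2 - 2*A.1*A.2*C.1*D.2^2*O.1 + A.1*A.2*C.1^2*D.2^2 - 2*A.1*A.2*B.2^2*D.1*O.1 + A.1*A.2*B.2^2*D.1^2 + 2*A.1*A.2*B.2^2*C.1*O.1 - A.1*A.2*B.2^2*C.1^2 + 2*A.1*A.2*B.1*D.2^2*O.1 - 2*A.1*A.2*B.1*C.2^2*O.1 - A.1*A.2*B.1^2*D.2^2 + A.1*A.2*B.1^2*C.2^2 - A.1^2*C.2^2*D.1*O.2 + A.1^2*C.2^2*D.1*D.2 + A.1^2*C.1*D.2^2*O.2 - A.1^2*C.1*C.2*D.2^2 + A.1^2*B.2^2*D.1*O.2 - A.1^2*B.2^2*D.1*D.2 - A.1^2*B.2^2*C.1*O.2 + A.1^2*B.2^2*C.1*C.2 - A.1^2*B.1*D.2^2*O.2 + A.1^2*B.1*C.2^2*O.2 + A.1^2*B.1*B.2*D.2^2 - A.1^2*B.1*B.2*C.2^2) * e5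
    have hsum : (elevenC A B C D).eval O * (f.a^2 + f.b^2 + f.c^2 + f.d^2 + f.e^2) = 0 := by
      linear_combination f.a * key_a + f.b * key_b + f.c * key_c + f.d * key_d + f.e * key_e
    have hss : f.a^2 + f.b^2 + f.c^2 + f.d^2 + f.e^2 ≠ 0 := by
      intro h
      apply hv5
      have sa := sq_nonneg f.a
      have sb := sq_nonneg f.b
      have sc := sq_nonneg f.c
      have sd := sq_nonneg f.d
      have se := sq_nonneg f.e
      refine ⟨?_, ?_, ?_, ?_, ?_⟩ <;>
        [ exact pow_eq_zero_iff two_ne_zero |>.mp (by linarith);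
          exact pow_eq_zero_iff two_ne_zero |>.mp (by linarith);
          exact pow_eq_zero_iff two_ne_zero |>.mp (by linarith);
          exact pow_eq_zero_iff two_ne_zero |>.mp (by linarith);
          exact pow_eq_zero_iff two_ne_zero |>.mp (by linarith) ]
    rcases mul_eq_zero.mp hsum with h | h
    · exact h
    · exact absurd h hss
  · -- midpoints
    refine ⟨?_, ?_, ?_, ?_, ?_, ?_⟩ <;>
      rw [midpoint_coords] <;>
      simp only [elevenC, jacConic, prodConic, lineCf, Conic.eval] <;>
      ring
  · -- diagonal points
    rintro E (⟨h1, h2⟩ | ⟨h1, h2⟩ | ⟨h1, h2⟩)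
    · have c1 := cross_eq_zero_of_mem A B h1
      have c2 := cross_eq_zero_of_mem C D h2
      simp only [elevenC, jacConic, prodConic, lineCf, Conic.eval]
      linear_combination (-C.2*D.1*D.2*E.1 + C.2*D.1^2*E.2 - C.2^2*D.1*E.1 + C.1*D.2^2*E.1 - C.1*D.1*D.2*E.2 + C.1*C.2*D.2*E.1 + C.1*C.2*D.1*E.2 - C.1^2*D.2*E.2 + 2*B.2*C.2*D.1*E.1 - B.2*C.2*D.1^2 - B.2*C.1*D.2*E.1 - B.2*C.1*D.1*E.2 + B.2*C.1*D.1*D.2 - B.2*C.1*C.2*E.1 + B.2*C.1^2*E.2 - B.1*C.2*D.2*E.1 - B.1*C.2*D.1*E.2 + B.1*C.2*D.1*D.2 + B.1*C.2^2*E.1 + 2*B.1*C.1*D.2*E.2 - B.1*C.1*D.2^2 - B.1*C.1*C.2*E.2 + A.2*D.1*D.2*E.1 - A.2*D.1^2*E.2 + A.2*C.2*D.1*E.1 - 2*A.2*C.1*D.2*E.1 + A.2*C.1*D.1*E.2 - A.2*C.1*C.2*D.1 + A.2*C.1^2*D.2 - 2*A.2*B.2*D.1*E.1 + A.2*B.2*D.1^2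 + 2*A.2*B.2*C.1*E.1 - A.2*B.2*C.1^2 + A.2*B.1*D.2*E.1 + A.2*B.1*D.1*E.2 - A.2*B.1*D.1*D.2 - A.2*B.1*C.2*E.1 - A.2*B.1*C.1*E.2 + A.2*B.1*C.1*C.2 - A.1*D.2^2*E.1 + A.1*D.1*D.2*E.2 + A.1*C.2*D.2*E.1 - 2*A.1*C.2*D.1*E.2 + A.1*C.2^2*D.1 + A.1*C.1*D.2*E.2 - A.1*C.1*C.2*D.2 + A.1*B.2*D.2*E.1 + A.1*B.2*D.1*E.2 - A.1*B.2*D.1*D.2 - A.1*B.2*C.2*E.1 - A.1*B.2*C.1*E.2 + A.1*B.2*C.1*C.2 - 2*A.1*B.1*D.2*E.2 + A.1*B.1*D.2^2 + 2*A.1*B.1*C.2*E.2 - A.1*B.1*C.2^2) * c1 + (B.2*C.2*D.1*E.1 + B.2*C.1*D.2*E.1 - 2*B.2*C.1*D.1*E.2 - B.2^2*C.1*E.1 + B.2^2*C.1*D.1 - 2*B.1*C.2*D.2*E.1 + B.1*C.2*D.1*E.2 + B.1*C.1*D.2*E.2 + B.1*B.2*C.2*E.1 - B.1*B.2*C.2*D.1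 + B.1*B.2*C.1*E.2 - B.1*B.2*C.1*D.2 - B.1^2*C.2*E.2 + B.1^2*C.2*D.2 - A.2*C.2*D.1*E.1 - A.2*C.1*D.2*E.1 + 2*A.2*C.1*D.1*E.2 - A.2*B.2*D.1*E.1 + A.2*B.2*C.1*E.1 + 2*A.2*B.1*D.2*E.1 - A.2*B.1*D.1*E.2 + A.2*B.1*C.2*E.1 - 2*A.2*B.1*C.1*E.2 - A.2*B.1*B.2*E.1 + A.2*B.1*B.2*D.1 + A.2*B.1^2*E.2 - A.2*B.1^2*D.2 + A.2^2*D.1*E.1 - A.2^2*C.1*D.1 - A.2^2*B.1*E.1 + A.2^2*B.1*C.1 + 2*A.1*C.2*D.2*E.1 - A.1*C.2*D.1*E.2 - A.1*C.1*D.2*E.2 - A.1*B.2*D.2*E.1 + 2*A.1*B.2*D.1*E.2 - 2*A.1*B.2*C.2*E.1 + A.1*B.2*C.1*E.2 + A.1*B.2^2*E.1 - A.1*B.2^2*D.1 - A.1*B.1*D.2*E.2 + A.1*B.1*C.2*E.2 - A.1*B.1*B.2*E.2 + A.1*B.1*B.2*D.2 - A.1*A.2*D.2*E.1 - A.1*A.2*D.1*E.2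 + A.1*A.2*C.2*D.1 + A.1*A.2*C.1*D.2 + A.1*A.2*B.2*E.1 - A.1*A.2*B.2*C.1 + A.1*A.2*B.1*E.2 - A.1*A.2*B.1*C.2 + A.1^2*D.2*E.2 - A.1^2*C.2*D.2 - A.1^2*B.2*E.2 + A.1^2*B.2*C.2) * c2
    · have c1 := cross_eq_zero_of_mem A C h1
      have c2 := cross_eq_zero_of_mem B D h2
      simp only [elevenC, jacConic, prodConic, lineCf, Conic.eval]
      linear_combination (B.2*D.1*D.2*E.1 - B.2*D.1^2*E.2 - 2*B.2*C.2*D.1*E.1 + B.2*C.2*D.1^2 + B.2*C.1*D.2*E.1 + B.2*C.1*D.1*E.2 - B.2*C.1*D.1*D.2 + B.2^2*D.1*E.1 - B.2^2*C.1*E.1 - B.1*D.2^2*E.1 + B.1*D.1*D.2*E.2 + B.1*C.2*D.2*E.1 + B.1*C.2*D.1*E.2 - B.1*C.2*D.1*D.2 - 2*B.1*C.1*D.2*E.2 + B.1*C.1*D.2^2 - B.1*B.2*D.2*E.1 - B.1*B.2*D.1*E.2 + B.1*B.2*C.2*E.1 + B.1*B.2*C.1*E.2 + B.1^2*D.2*E.2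 - B.1^2*C.2*E.2 - A.2*D.1*D.2*E.1 + A.2*D.1^2*E.2 + 2*A.2*C.2*D.1*E.1 - A.2*C.2*D.1^2 - A.2*C.1*D.2*E.1 - A.2*C.1*D.1*E.2 + A.2*C.1*D.1*D.2 - A.2*B.2*D.1*E.1 + A.2*B.2*C.1*E.1 + 2*A.2*B.1*D.2*E.1 - A.2*B.1*D.1*E.2 - 2*A.2*B.1*C.2*E.1 + A.2*B.1*C.1*E.2 + A.2*B.1*B.2*D.1 - A.2*B.1*B.2*C.1 - A.2*B.1^2*D.2 + A.2*B.1^2*C.2 + A.1*D.2^2*E.1 - A.1*D.1*D.2*E.2 - A.1*C.2*D.2*E.1 - A.1*C.2*D.1*E.2 + A.1*C.2*D.1*D.2 + 2*A.1*C.1*D.2*E.2 - A.1*C.1*D.2^2 - A.1*B.2*D.2*E.1 + 2*A.1*B.2*D.1*E.2 + A.1*B.2*C.2*E.1 - 2*A.1*B.2*C.1*E.2 - A.1*B.2^2*D.1 + A.1*B.2^2*C.1 - A.1*B.1*D.2*E.2 + A.1*B.1*C.2*E.2 + A.1*B.1*B.2*D.2 - A.1*B.1*B.2*C.2) * c1 +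 (-B.2*C.2*D.1*E.1 + 2*B.2*C.1*D.2*E.1 - B.2*C.1*D.1*E.2 - B.2*C.1*C.2*E.1 + B.2*C.1*C.2*D.1 + B.2*C.1^2*E.2 - B.2*C.1^2*D.2 - B.1*C.2*D.2*E.1 + 2*B.1*C.2*D.1*E.2 + B.1*C.2^2*E.1 - B.1*C.2^2*D.1 - B.1*C.1*D.2*E.2 - B.1*C.1*C.2*E.2 + B.1*C.1*C.2*D.2 + A.2*C.2*D.1*E.1 - 2*A.2*C.1*D.2*E.1 + A.2*C.1*D.1*E.2 + A.2*C.1*C.2*E.1 - A.2*C.1*C.2*D.1 - A.2*C.1^2*E.2 + A.2*C.1^2*D.2 + A.2*B.2*D.1*E.1 - A.2*B.2*C.1*E.1 + A.2*B.1*D.2*E.1 - 2*A.2*B.1*D.1*E.2 - A.2*B.1*C.2*E.1 + 2*A.2*B.1*C.1*E.2 - A.2^2*D.1*E.1 + A.2^2*C.1*E.1 + A.2^2*B.1*D.1 - A.2^2*B.1*C.1 + A.1*C.2*D.2*E.1 - 2*A.1*C.2*D.1*E.2 - A.1*C.2^2*E.1 + A.1*C.2^2*D.1 + A.1*C.1*D.2*E.2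 + A.1*C.1*C.2*E.2 - A.1*C.1*C.2*D.2 - 2*A.1*B.2*D.2*E.1 + A.1*B.2*D.1*E.2 + 2*A.1*B.2*C.2*E.1 - A.1*B.2*C.1*E.2 + A.1*B.1*D.2*E.2 - A.1*B.1*C.2*E.2 + A.1*A.2*D.2*E.1 + A.1*A.2*D.1*E.2 - A.1*A.2*C.2*E.1 - A.1*A.2*C.1*E.2 - A.1*A.2*B.2*D.1 + A.1*A.2*B.2*C.1 - A.1*A.2*B.1*D.2 + A.1*A.2*B.1*C.2 - A.1^2*D.2*E.2 + A.1^2*C.2*E.2 + A.1^2*B.2*D.2 - A.1^2*B.2*C.2) * c2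
    · have c1 := cross_eq_zero_of_mem A D h1
      have c2 := cross_eq_zero_of_mem B C h2
      simp only [elevenC, jacConic, prodConic, lineCf, Conic.eval]
      linear_combination (-B.2*C.2*D.1*E.1 + 2*B.2*C.1*D.2*E.1 - B.2*C.1*D.1*E.2 - B.2*C.1*C.2*E.1 + B.2*C.1*C.2*D.1 + B.2*C.1^2*E.2 - B.2*C.1^2*D.2 + B.2^2*D.1*E.1 - B.2^2*C.1*E.1 - B.1*C.2*D.2*E.1 + 2*B.1*C.2*D.1*E.2 + B.1*C.2^2*E.1 - B.1*C.2^2*D.1 - B.1*C.1*D.2*E.2 - B.1*C.1*C.2*E.2 + B.1*C.1*C.2*D.2 - B.1*B.2*D.2*E.1 - B.1*B.2*D.1*E.2 + B.1*B.2*C.2*E.1 + B.1*B.2*C.1*E.2 + B.1^2*D.2*E.2 - B.1^2*C.2*E.2 + A.2*C.2*D.1*E.1 - 2*A.2*C.1*D.2*E.1 + A.2*C.1*D.1*E.2 + A.2*C.1*C.2*E.1 - A.2*C.1*C.2*D.1 - A.2*C.1^2*E.2 + A.2*C.1^2*D.2 - A.2*B.2*D.1*E.1 + A.2*B.2*C.1*E.1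 + 2*A.2*B.1*D.2*E.1 - A.2*B.1*D.1*E.2 - 2*A.2*B.1*C.2*E.1 + A.2*B.1*C.1*E.2 + A.2*B.1*B.2*D.1 - A.2*B.1*B.2*C.1 - A.2*B.1^2*D.2 + A.2*B.1^2*C.2 + A.1*C.2*D.2*E.1 - 2*A.1*C.2*D.1*E.2 - A.1*C.2^2*E.1 + A.1*C.2^2*D.1 + A.1*C.1*D.2*E.2 + A.1*C.1*C.2*E.2 - A.1*C.1*C.2*D.2 - A.1*B.2*D.2*E.1 + 2*A.1*B.2*D.1*E.2 + A.1*B.2*C.2*E.1 - 2*A.1*B.2*C.1*E.2 - A.1*B.2^2*D.1 + A.1*B.2^2*C.1 - A.1*B.1*D.2*E.2 + A.1*B.1*C.2*E.2 + A.1*B.1*B.2*D.2 - A.1*B.1*B.2*C.2) * c1 + (B.2*D.1*D.2*E.1 - B.2*D.1^2*E.2 - 2*B.2*C.2*D.1*E.1 + B.2*C.2*D.1^2 + B.2*C.1*D.2*E.1 + B.2*C.1*D.1*E.2 - B.2*C.1*D.1*D.2 - B.1*D.2^2*E.1 + B.1*D.1*D.2*E.2 + B.1*C.2*D.2*E.1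 + B.1*C.2*D.1*E.2 - B.1*C.2*D.1*D.2 - 2*B.1*C.1*D.2*E.2 + B.1*C.1*D.2^2 - A.2*D.1*D.2*E.1 + A.2*D.1^2*E.2 + 2*A.2*C.2*D.1*E.1 - A.2*C.2*D.1^2 - A.2*C.1*D.2*E.1 - A.2*C.1*D.1*E.2 + A.2*C.1*D.1*D.2 + A.2*B.2*D.1*E.1 - A.2*B.2*C.1*E.1 + A.2*B.1*D.2*E.1 - 2*A.2*B.1*D.1*E.2 - A.2*B.1*C.2*E.1 + 2*A.2*B.1*C.1*E.2 - A.2^2*D.1*E.1 + A.2^2*C.1*E.1 + A.2^2*B.1*D.1 - A.2^2*B.1*C.1 + A.1*D.2^2*E.1 - A.1*D.1*D.2*E.2 - A.1*C.2*D.2*E.1 - A.1*C.2*D.1*E.2 + A.1*C.2*D.1*D.2 + 2*A.1*C.1*D.2*E.2 - A.1*C.1*D.2^2 - 2*A.1*B.2*D.2*E.1 + A.1*B.2*D.1*E.2 + 2*A.1*B.2*C.2*E.1 - A.1*B.2*C.1*E.2 + A.1*B.1*D.2*E.2 - A.1*B.1*C.2*E.2 + A.1*A.2*D.2*E.1 +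 A.1*A.2*D.1*E.2 - A.1*A.2*C.2*E.1 - A.1*A.2*C.1*E.2 - A.1*A.2*B.2*D.1 + A.1*A.2*B.2*C.1 - A.1*A.2*B.1*D.2 + A.1*A.2*B.1*C.2 - A.1^2*D.2*E.2 + A.1^2*C.2*E.2 + A.1^2*B.2*D.2 - A.1^2*B.2*C.2) * c2
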